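/- Let n ≥ 2, let T be a sparse 0-1 word of length n−1, and let Γ ∈ L̃(T). Then ε(Γ) + η(Γ) ≡ χ(Γ(n) > 0)·(n−1) + Σ_{h=1}^{t} r_h (mod 2), where χ(Γ(n) > 0) = 1 if Γ(n) > 0 and 0 otherwise. -/

import Mathlib

/-- `S(T)`: the set of (1-indexed) positions of the 1's of the word `T`. -/
def onesSet (T : List Bool) : Finset ℕ :=
  ((Finset.range T.length).filter (fun i => T.getD i false = true)).image (· + 1)

/-- The increasing list `s_1 < ⋯ < s_t` of positions of the 1's of `T`. -/
def sListOf (T : List Bool) : List ℕ := (onesSet T).sort (· ≤ ·)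

/-- `sfun n T j = s_j`, with the conventions `s_0 = 0` and `s_j = n` for `j > t`. -/
def sfun (n : ℕ) (T : List Bool) (j : ℕ) : ℕ :=
  if j = 0 then 0 else (sListOf T).getD (j - 1) n

/-- `tOf T = t`, the number of 1's of `T`. -/
def tOf (T : List Bool) : ℕ := (onesSet T).card

/-- `S ∩ (s_j, s_{j+1})`, the elements of `S` lying strictly between `s_j` and `s_{j+1}`. -/
def intv (n : ℕ) (T : List Bool) (S : Finset ℕ) (j : ℕ) : Finset ℕ :=
  S.filter (fun x => sfun n T j < x ∧ x < sfun n T (j + 1))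

/-- `S ∈ G(T)`: every interval `(s_j, s_{j+1})` with `0 ≤ j ≤ t-1` meets `S`, and any two
elements of `S` in a common interval `(s_j, s_{j+1})`, `0 ≤ j ≤ t`, are congruent mod 2. -/
def memG (n : ℕ) (T : List Bool) (S : Finset ℕ) : Prop :=
  (∀ j < tOf T, (intv n T S j).Nonempty) ∧
    (∀ j ≤ tOf T, ∀ x ∈ intv n T S j, ∀ y ∈ intv n T S j, x % 2 = y % 2)

/-- `sgn(S,T) = (-1)^(Σ_{j=0}^{t-1} (s_{j+1} - y_j - 1))`, with `y_j` the least element of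
`S ∩ (s_j, s_{j+1})` (any choice gives the same value when `S ∈ G(T)`). -/
noncomputable def sgnST (n : ℕ) (T : List Bool) (S : Finset ℕ) : ℚ :=
  (-1 : ℚ) ^ (∑ j ∈ Finset.range (tOf T),
    (sfun n T (j + 1) - (intv n T S j).min.untopD 0 - 1))

/-- `h_{S,T}`. -/
noncomputable def hST (n : ℕ) (T : List Bool) (S : Finset ℕ) : ℚ :=
  haveI := Classical.propDecidable (memG n T S)
  if memG n T S then sgnST n T S else 0

/-- `∂(E) = {i ∈ [m-1] : E_i ≠ E_{i+1}} ∪ {m}` for a word `E` of length `m` (1-indexed). -/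
def bnd (E : List Bool) : Finset ℕ :=
  ((Finset.Icc 1 (E.length - 1)).filter
      (fun i => E.getD (i - 1) false ≠ E.getD i false)) ∪ {E.length}

/-- A word is sparse if it does not begin with a 1 and has no two consecutive 1's. -/
def Sparse (E : List Bool) : Prop :=
  E.head? ≠ some true ∧ E.Chain' (fun a b => ¬(a = true ∧ b = true))

/-- The finset of all 0-1 words of length `n` (encoding lattice paths by their up/down steps,
`true` = up-step). -/
def allWords : ℕ → Finset (List Bool)
  | 0 => {[]}
  | n + 1 => (allWords n).image (List.cons false) ∪ (allWords n).image (List.cons true)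

/-- `pathHt w i = Γ(i)`, the height of the lattice path with step word `w` after `i` steps. -/
def pathHt (w : List Bool) (i : ℕ) : ℤ :=
  (((w.take i).map (fun b => if b then (1 : ℤ) else -1))).sum

/-- `d₊(Γ)`, the number of up-steps. -/
def dplus (w : List Bool) : ℕ := w.count true

/-- `N(Γ)`: the word of length `n-1` whose `i`-th letter is 1 iff `Γ(i) < 0`. -/
def NGamma (w : List Bool) : List Bool :=
  (List.range (w.length - 1)).map (fun i => decide (pathHt w (i + 1) < 0))

/-- Membership in `L(T)` for a step word `w` of length `n`. -/
def memL (n : ℕ) (T : List Bool) (w : List Bool) : Prop :=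
  (∀ j < tOf T, (intv n T (bnd (NGamma w)) j).card = 1) ∧
    (intv n T (bnd (NGamma w)) (tOf T)).card ≤ 2 ∧
    (∀ x ∈ intv n T (bnd (NGamma w)) (tOf T),
      n - 1 ∈ intv n T (bnd (NGamma w)) (tOf T) → x % 2 = (n - 1) % 2)

/-- `L(T)` as a finset of step words of length `n`. -/
noncomputable def pathsL (n : ℕ) (T : List Bool) : Finset (List Bool) :=
  @Finset.filter _ (memL n T) (Classical.decPred _) (allWords n)

/-- `x_h(Γ)`: the (unique, for `Γ ∈ L(T)` and `h ∈ [t]`) element of `∂(N(Γ)) ∩ (s_{h-1}, s_h)`. -/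
noncomputable def xh (n : ℕ) (T : List Bool) (w : List Bool) (h : ℕ) : ℕ :=
  (intv n T (bnd (NGamma w)) (h - 1)).min.untopD 0

/-- `ε(Γ) = Σ_{h=1}^t (s_h - x_h(Γ) - 1)`. -/
noncomputable def epsP (n : ℕ) (T : List Bool) (w : List Bool) : ℕ :=
  ∑ h ∈ Finset.Icc 1 (tOf T), (sfun n T h - xh n T w h - 1)

/-- `η(Γ) = |{j ∈ [n-1] : Γ(j) ≥ 0}|`. -/
def etaP (n : ℕ) (w : List Bool) : ℕ :=
  ((Finset.Icc 1 (n - 1)).filter (fun j => 0 ≤ pathHt w j)).card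

/-- `L₀(T) = {Γ ∈ L(T) : Γ(r_i) = 0 for some i ∈ [t]}`, where `r_i = s_i + 1`. -/
noncomputable def L0 (n : ℕ) (T : List Bool) : Finset (List Bool) :=
  @Finset.filter _ (fun w => ∃ i ∈ Finset.Icc 1 (tOf T), pathHt w (sfun n T i + 1) = 0)
    (Classical.decPred _) (pathsL n T)

/-- `L₀'(T) = {Γ ∈ L(T) : Γ(x) = 0 for some r_t ≤ x ≤ n}`. -/
noncomputable def L0' (n : ℕ) (T : List Bool) : Finset (List Bool) :=
  @Finset.filter _ (fun w => ∃ x ∈ Finset.Icc (sfun n T (tOf T) + 1) n, pathHt w x = 0)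
    (Classical.decPred _) (pathsL n T)

/-- `L̃(T)`. -/
noncomputable def Ltilde (n : ℕ) (T : List Bool) : Finset (List Bool) :=
  if Even n then pathsL n T \ (L0 n T ∪ L0' n T) else pathsL n T \ L0 n T

open Finset

lemma allWords_length {n : ℕ} {w : List Bool} (h : w ∈ allWords n) : w.length = n := by
  induction n generalizing w with
  | zero =>
    simp only [allWords, Finset.mem_singleton] at h
    subst h; rfl
  | succ k ih =>
    simp only [allWords, Finset.mem_union, Finset.mem_image] at h
    rcases h with ⟨a, ha, rfl⟩ | ⟨a, ha, rfl⟩ <;> simp [ih ha]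

lemma pathHt_succ (w : List Bool) (i : ℕ) (hi : i < w.length) :
    pathHt w (i+1) = pathHt w i + (if w.get ⟨i, hi⟩ then (1:ℤ) else -1) := by
  have h1 : pathHt w (i+1) = ((w.map (fun b => if b then (1:ℤ) else -1)).take (i+1)).sum := by
    rw [pathHt, List.map_take]
  have h2 : pathHt w i = ((w.map (fun b => if b then (1:ℤ) else -1)).take i).sum := by
    rw [pathHt, List.map_take]
  rw [h1, h2, List.sum_take_succ _ i (by simpa using hi)]
  simp

lemma pathHt_step (w : List Bool) (i : ℕ) (hi : i < w.length) :
    pathHt w (i+1) = pathHt w i + 1 ∨ pathHt w (i+1) = pathHt w i - 1 := by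
  rw [pathHt_succ w i hi]
  have hg : w.get ⟨i, hi⟩ = w[i] := rfl
  rw [hg]
  by_cases h : w[i] = true
  · left; simp [h]
  · right; simp [h]; ring

lemma pathHt_parity (w : List Bool) : ∀ i, i ≤ w.length → Even (pathHt w i + i) := by
  intro i
  induction i with
  | zero => intro _; simp [pathHt]
  | succ k ih =>
    intro hk
    have hk' : k < w.length := hk
    obtain ⟨c, hc⟩ := ih (le_of_lt hk')
    rcases pathHt_step w k hk' with h | h <;> rw [h] <;> push_cast
    · exact ⟨c+1, by linarith⟩
    · exact ⟨c, by linarith⟩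

lemma NGamma_length (w : List Bool) : (NGamma w).length = w.length - 1 := by simp [NGamma]

lemma NGamma_getD (w : List Bool) (j : ℕ) (hj : j < w.length - 1) :
    (NGamma w).getD j false = decide (pathHt w (j+1) < 0) := by
  rw [NGamma, List.getD_eq_getElem _ _ (by simpa using hj)]
  simp

lemma mem_bnd_iff {w : List Bool} {n : ℕ} (hlen : w.length = n) (hn : 2 ≤ n) {i : ℕ}
    (h1 : 1 ≤ i) (h2 : i ≤ n - 2) :
    i ∈ bnd (NGamma w) ↔ ¬(pathHt w i < 0 ↔ pathHt w (i+1) < 0) := by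
  have hN : (NGamma w).length = n - 1 := by rw [NGamma_length, hlen]
  have hi1 : i - 1 < w.length - 1 := by omega
  have hi2 : i < w.length - 1 := by omega
  rw [bnd, Finset.mem_union, Finset.mem_singleton, hN]
  have hne : ¬ i = n - 1 := by omega
  simp only [hne, or_false, Finset.mem_filter, Finset.mem_Icc]
  rw [NGamma_getD w (i-1) hi1, NGamma_getD w i hi2]
  have he : i - 1 + 1 = i := by omega
  rw [he]
  simp only [ne_eq, decide_eq_decide]
  constructor
  · rintro ⟨-, hne'⟩; exact hne'
  · intro h; exact ⟨⟨by omega, by omega⟩, h⟩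

lemma top_mem_bnd (w : List Bool) {n : ℕ} (hlen : w.length = n) :
    n - 1 ∈ bnd (NGamma w) := by
  rw [bnd]
  apply Finset.mem_union_right
  rw [Finset.mem_singleton, NGamma_length, hlen]

lemma mem_onesSet_bounds {T : List Bool} {x : ℕ} (h : x ∈ onesSet T) :
    1 ≤ x ∧ x ≤ T.length := by
  simp only [onesSet, Finset.mem_image, Finset.mem_filter, Finset.mem_range] at h
  obtain ⟨i, ⟨hi, -⟩, rfl⟩ := h
  omega

lemma sListOf_length (T : List Bool) : (sListOf T).length = tOf T := Finset.length_sort _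

lemma sfun_zero (n : ℕ) (T : List Bool) : sfun n T 0 = 0 := rfl

lemma sfun_mem {n : ℕ} {T : List Bool} {h : ℕ} (h1 : 1 ≤ h) (h2 : h ≤ tOf T) :
    sfun n T h ∈ onesSet T := by
  have hlt : h - 1 < (sListOf T).length := by rw [sListOf_length]; omega
  rw [sfun, if_neg (by omega), List.getD_eq_getElem _ _ hlt]
  rw [← Finset.mem_sort (α := ℕ) (· ≤ ·)]
  exact List.getElem_mem hlt

lemma sfun_bounds {n : ℕ} {T : List Bool} {h : ℕ} (h1 : 1 ≤ h) (h2 : h ≤ tOf T) :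
    1 ≤ sfun n T h ∧ sfun n T h ≤ T.length :=
  mem_onesSet_bounds (sfun_mem h1 h2)

lemma sfun_lt {n : ℕ} {T : List Bool} {a b : ℕ} (hab : a < b) (hb : b ≤ tOf T) :
    sfun n T a < sfun n T b := by
  rcases Nat.eq_zero_or_pos a with rfl | ha
  · rw [sfun_zero]
    exact (sfun_bounds (by omega) hb).1
  · have hla : a - 1 < (sListOf T).length := by rw [sListOf_length]; omega
    have hlb : b - 1 < (sListOf T).length := by rw [sListOf_length]; omega
    rw [sfun, if_neg (by omega), List.getD_eq_getElem _ _ hla]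
    rw [sfun, if_neg (by omega), List.getD_eq_getElem _ _ hlb]
    have hs : (sListOf T).SortedLT := Finset.sortedLT_sort _
    exact hs.strictMono_get (show (⟨a-1, hla⟩ : Fin _) < ⟨b-1, hlb⟩ from by
      simp [Fin.lt_def]; omega)

lemma sfun_le {n : ℕ} {T : List Bool} {a b : ℕ} (hab : a ≤ b) (hb : b ≤ tOf T) :
    sfun n T a ≤ sfun n T b := by
  rcases eq_or_lt_of_le hab with rfl | h
  · exact le_rfl
  · exact le_of_lt (sfun_lt h hb)

lemma sfun_le_len {n : ℕ} {T : List Bool} {h : ℕ} (h2 : h ≤ tOf T) :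
    sfun n T h ≤ T.length := by
  rcases Nat.eq_zero_or_pos h with rfl | h1
  · rw [sfun_zero]; omega
  · exact (sfun_bounds h1 h2).2

lemma sfun_gt_t {n : ℕ} {T : List Bool} {j : ℕ} (hj : tOf T < j) : sfun n T j = n := by
  rw [sfun, if_neg (by omega), List.getD_eq_default]
  rw [sListOf_length]; omega

lemma sfun_cover (n : ℕ) (T : List Bool) (i : ℕ) (h1 : 1 ≤ i) :
    (∃ h, 1 ≤ h ∧ h ≤ tOf T ∧ i = sfun n T h) ∨
    (∃ h, 1 ≤ h ∧ h ≤ tOf T ∧ sfun n T (h-1) < i ∧ i < sfun n T h) ∨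
    sfun n T (tOf T) < i := by
  classical
  have hP0 : sfun n T 0 ≤ i := by rw [sfun_zero]; omega
  set H := Nat.findGreatest (fun h => sfun n T h ≤ i) (tOf T) with hH
  have hHle : H ≤ tOf T := Nat.findGreatest_le _
  have hHspec : sfun n T H ≤ i :=
    Nat.findGreatest_spec (P := fun h => sfun n T h ≤ i) (Nat.zero_le _) hP0
  rcases eq_or_lt_of_le hHspec with heq | hlt
  · left
    refine ⟨H, ?_, hHle, heq.symm⟩
    rcases Nat.eq_zero_or_pos H with h0 | h0
    · exfalso; rw [h0, sfun_zero] at heq; omega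
    · omega
  · by_cases hHt : H = tOf T
    · right; right; rw [← hHt]; exact hlt
    · right; left
      have hgr : ¬ (sfun n T (H+1) ≤ i) :=
        Nat.findGreatest_is_greatest (P := fun h => sfun n T h ≤ i) (n := tOf T) (k := H+1) (by omega) (by omega)
      refine ⟨H+1, by omega, by omega, ?_, by omega⟩
      simpa using hlt

lemma intv_eq_singleton {n : ℕ} {T w : List Bool} (hmemL : memL n T w) {h : ℕ}
    (h1 : 1 ≤ h) (h2 : h ≤ tOf T) :
    intv n T (bnd (NGamma w)) (h-1) = {xh n T w h} := by
  have hc := hmemL.1 (h-1) (by omega)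
  obtain ⟨x, hx⟩ := Finset.card_eq_one.mp hc
  have hxx : xh n T w h = x := by
    rw [xh, hx, Finset.min_singleton]
    rfl
  rw [hxx, hx]

lemma xh_bounds {n : ℕ} {T w : List Bool} (hmemL : memL n T w) {h : ℕ}
    (h1 : 1 ≤ h) (h2 : h ≤ tOf T) :
    sfun n T (h-1) < xh n T w h ∧ xh n T w h < sfun n T h ∧
      xh n T w h ∈ bnd (NGamma w) := by
  have hmem : xh n T w h ∈ intv n T (bnd (NGamma w)) (h-1) := by
    rw [intv_eq_singleton hmemL h1 h2]
    exact Finset.mem_singleton_self _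
  rw [intv, Finset.mem_filter] at hmem
  have he : h - 1 + 1 = h := by omega
  rw [he] at hmem
  exact ⟨hmem.2.1, hmem.2.2, hmem.1⟩

lemma zmod2_natCast (x : ℕ) : (x : ZMod 2) = if x % 2 = 1 then 1 else 0 := by
  conv_lhs => rw [← Nat.mod_add_div x 2]
  push_cast
  rw [show ((2:ZMod 2)) = 0 from rfl]
  rcases Nat.mod_two_eq_zero_or_one x with h | h <;> rw [h] <;> simp

lemma main_ind {n : ℕ} (w : List Bool) (hlen : w.length = n) (hn : 2 ≤ n) :
    ∀ j, 1 ≤ j → j ≤ n - 1 →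
      (∑ i ∈ Finset.Icc 1 j, (if pathHt w i < 0 then (1 : ZMod 2) else 0)) =
        (∑ i ∈ Finset.Icc 1 (j-1),
          (if pathHt w i < 0 ∧ 0 ≤ pathHt w (i+1) then (1 : ZMod 2) else 0)) +
          (j : ZMod 2) * (if pathHt w j < 0 then 1 else 0) := by
  intro j
  induction j with
  | zero => omega
  | succ k ih =>
    intro _ hk
    rcases Nat.eq_zero_or_pos k with rfl | hk1
    · simp only [zero_add, Finset.Icc_self, Finset.sum_singleton, Nat.cast_one, one_mul]
      rw [show (1:ℕ) - 1 = 0 from rfl, show Finset.Icc 1 0 = ∅ from rfl, Finset.sum_empty, zero_add]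
    · have ihk := ih hk1 (by omega)
      rw [Finset.sum_Icc_succ_top (by omega : 1 ≤ k+1), ihk]
      have he1 : k + 1 - 1 = k := by omega
      have he2 : k - 1 + 1 = k := by omega
      rw [he1]
      rw [← he2, Finset.sum_Icc_succ_top (by omega : 1 ≤ k - 1 + 1), he2]
      have hstep := pathHt_step w k (by omega)
      have hpar1 := pathHt_parity w k (by omega)
      have hpar2 := pathHt_parity w (k+1) (by omega)
      by_cases hA : pathHt w k < 0 <;> by_cases hB : pathHt w (k+1) < 0
      · rw [if_pos hA, if_pos hB,
          if_neg (show ¬(pathHt w k < 0 ∧ 0 ≤ pathHt w (k+1)) by omega)]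
        push_cast
        ring
      · have hB0 : pathHt w (k+1) = 0 := by omega
        have hkodd : k % 2 = 1 := by
          rw [hB0] at hpar2
          have : Even ((k:ℤ)+1) := by push_cast at hpar2; simpa using hpar2
          rcases this with ⟨c, hc⟩
          omega
        rw [if_pos hA, if_neg hB,
          if_pos (show pathHt w k < 0 ∧ 0 ≤ pathHt w (k+1) from ⟨hA, by omega⟩),
          zmod2_natCast k, if_pos hkodd]
        ring
      · have hA0 : pathHt w k = 0 := by omega
        have hkeven : k % 2 = 0 := by
          rw [hA0] at hpar1
          have : Even ((k:ℤ)) := by simpa using hpar1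
          rcases this with ⟨c, hc⟩
          omega
        rw [if_neg hA, if_pos hB,
          if_neg (show ¬(pathHt w k < 0 ∧ 0 ≤ pathHt w (k+1)) from by tauto),
          zmod2_natCast (k+1), if_pos (by omega : (k+1) % 2 = 1)]
        ring
      · rw [if_neg hA, if_neg hB,
          if_neg (show ¬(pathHt w k < 0 ∧ 0 ≤ pathHt w (k+1)) from by tauto)]
        ring

lemma down_odd {n : ℕ} {w : List Bool} (hn : 2 ≤ n) (hlen : w.length = n) {b : ℕ}
    (hb1 : 1 ≤ b) (hb2 : b ≤ n - 2) (hA : pathHt w b < 0) (hB : 0 ≤ pathHt w (b+1)) :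
    pathHt w (b+1) = 0 ∧ b % 2 = 1 := by
  have hstep := pathHt_step w b (by omega)
  have h0 : pathHt w (b+1) = 0 := by omega
  have hpar := pathHt_parity w (b+1) (by omega)
  rw [h0] at hpar
  have : Even ((b:ℤ)+1) := by push_cast at hpar; simpa using hpar
  rcases this with ⟨c, hc⟩
  exact ⟨h0, by omega⟩

lemma down_card {n : ℕ} {T w : List Bool} (hn : 2 ≤ n) (hT : T.length = n - 1)
    (hlen : w.length = n) (hmemL : memL n T w)
    (hL0 : ∀ i ∈ Finset.Icc 1 (tOf T), pathHt w (sfun n T i + 1) ≠ 0)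
    (hL0' : Even n → ∀ x ∈ Finset.Icc (sfun n T (tOf T) + 1) n, pathHt w x ≠ 0) :
    ((Finset.Icc 1 (tOf T)).filter (fun h => (xh n T w h) % 2 = 1)).card =
    ((Finset.Icc 1 (n-2)).filter (fun i => pathHt w i < 0 ∧ 0 ≤ pathHt w (i+1))).card := by
  apply Finset.card_bij (fun h _ => xh n T w h)
  · -- maps into
    intro h ha
    rw [Finset.mem_filter, Finset.mem_Icc] at ha
    obtain ⟨⟨ha1, ha2⟩, hodd⟩ := ha
    obtain ⟨hlo, hhi, hbnd⟩ := xh_bounds hmemL ha1 ha2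
    have hsb : sfun n T h ≤ n - 1 := by
      have := sfun_le_len (n := n) ha2; omega
    have hx1 : 1 ≤ xh n T w h := by omega
    have hx2 : xh n T w h ≤ n - 2 := by omega
    rw [Finset.mem_filter, Finset.mem_Icc]
    refine ⟨⟨hx1, hx2⟩, ?_⟩
    have hch := (mem_bnd_iff hlen hn hx1 hx2).mp hbnd
    by_cases hA : pathHt w (xh n T w h) < 0
    · refine ⟨hA, ?_⟩
      by_contra hB
      exact hch ⟨fun _ => by omega, fun _ => hA⟩
    · exfalso
      by_cases hB : pathHt w (xh n T w h + 1) < 0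
      · -- up-change at odd position: impossible
        have hstep := pathHt_step w (xh n T w h) (by omega)
        have h0 : pathHt w (xh n T w h) = 0 := by omega
        have hpar := pathHt_parity w (xh n T w h) (by omega)
        rw [h0] at hpar
        have : Even ((xh n T w h : ℤ)) := by simpa using hpar
        rcases this with ⟨c, hc⟩
        omega
      · exact hch ⟨fun hh => absurd hh hA, fun hh => absurd hh hB⟩
  · -- injective
    intro a1 ha1 a2 ha2 heq
    rw [Finset.mem_filter, Finset.mem_Icc] at ha1 ha2
    by_contra hne
    rcases lt_trichotomy a1 a2 with hlt | heq' | hlt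
    · have hx1 := xh_bounds hmemL ha1.1.1 ha1.1.2
      have hx2 := xh_bounds hmemL ha2.1.1 ha2.1.2
      have : sfun n T a1 ≤ sfun n T (a2 - 1) := sfun_le (by omega) (by omega)
      omega
    · exact hne heq'
    · have hx1 := xh_bounds hmemL ha1.1.1 ha1.1.2
      have hx2 := xh_bounds hmemL ha2.1.1 ha2.1.2
      have : sfun n T a2 ≤ sfun n T (a1 - 1) := sfun_le (by omega) (by omega)
      omega
  · -- surjective
    intro b hb
    rw [Finset.mem_filter, Finset.mem_Icc] at hb
    obtain ⟨⟨hb1, hb2⟩, hA, hB⟩ := hb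
    obtain ⟨h0, hodd⟩ := down_odd hn hlen hb1 hb2 hA hB
    have hbbnd : b ∈ bnd (NGamma w) := by
      rw [mem_bnd_iff hlen hn hb1 hb2]
      intro hiff
      have := hiff.mp hA
      omega
    rcases sfun_cover n T b hb1 with ⟨h, hh1, hh2, heq⟩ | ⟨h, hh1, hh2, hlo, hhi⟩ | hst
    · exfalso
      apply hL0 h (Finset.mem_Icc.mpr ⟨hh1, hh2⟩)
      rw [← heq]
      exact h0
    · -- middle interval: b = xh h
      have hbint : b ∈ intv n T (bnd (NGamma w)) (h-1) := by
        rw [intv, Finset.mem_filter]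
        have he : h - 1 + 1 = h := by omega
        rw [he]
        exact ⟨hbbnd, hlo, hhi⟩
      rw [intv_eq_singleton hmemL hh1 hh2, Finset.mem_singleton] at hbint
      refine ⟨h, ?_, hbint.symm⟩
      rw [Finset.mem_filter, Finset.mem_Icc]
      exact ⟨⟨hh1, hh2⟩, by rw [← hbint]; exact hodd⟩
    · -- last interval: contradiction
      exfalso
      have hstop : sfun n T (tOf T + 1) = n := sfun_gt_t (by omega)
      have hbint : b ∈ intv n T (bnd (NGamma w)) (tOf T) := by
        rw [intv, Finset.mem_filter, hstop]
        exact ⟨hbbnd, hst, by omega⟩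
      have htop : (n-1) ∈ intv n T (bnd (NGamma w)) (tOf T) := by
        rw [intv, Finset.mem_filter, hstop]
        exact ⟨top_mem_bnd w hlen, by omega, by omega⟩
      have hmod := hmemL.2.2 b hbint htop
      by_cases hpar : Even n
      · exact hL0' hpar (b+1) (Finset.mem_Icc.mpr ⟨by omega, by omega⟩) h0
      · have : n % 2 = 1 := Nat.not_even_iff.mp hpar
        omega

theorem epsP_add_etaP_mod_two (n : ℕ) (hn : 2 ≤ n) (T : List Bool)
    (hT : T.length = n - 1) (hTs : Sparse T) (w : List Bool) (hw : w ∈ Ltilde n T) :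
    (epsP n T w + etaP n w) % 2 =
      ((if 0 < pathHt w n then n - 1 else 0) +
        ∑ h ∈ Finset.Icc 1 (tOf T), (sfun n T h + 1)) % 2 := by
  classical
  have hwL : w ∈ pathsL n T := by
    rw [Ltilde] at hw
    by_cases hpar : Even n
    · rw [if_pos hpar, Finset.mem_sdiff] at hw; exact hw.1
    · rw [if_neg hpar, Finset.mem_sdiff] at hw; exact hw.1
  have hL0 : ∀ i ∈ Finset.Icc 1 (tOf T), pathHt w (sfun n T i + 1) ≠ 0 := by
    intro i hi hzero
    have hmem : w ∈ L0 n T := by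
      rw [L0]
      exact (@Finset.mem_filter _ _ (Classical.decPred _) _ _).mpr ⟨hwL, ⟨i, hi, hzero⟩⟩
    rw [Ltilde] at hw
    by_cases hpar : Even n
    · rw [if_pos hpar, Finset.mem_sdiff, Finset.mem_union] at hw
      exact hw.2 (Or.inl hmem)
    · rw [if_neg hpar, Finset.mem_sdiff] at hw
      exact hw.2 hmem
  have hL0' : Even n → ∀ x ∈ Finset.Icc (sfun n T (tOf T) + 1) n, pathHt w x ≠ 0 := by
    intro hpar x hx hzero
    have hmem : w ∈ L0' n T := by
      rw [L0']
      exact (@Finset.mem_filter _ _ (Classical.decPred _) _ _).mpr ⟨hwL, ⟨x, hx, hzero⟩⟩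
    rw [Ltilde, if_pos hpar, Finset.mem_sdiff, Finset.mem_union] at hw
    exact hw.2 (Or.inr hmem)
  have hp' : w ∈ allWords n ∧ memL n T w := by
    rw [pathsL] at hwL
    exact (@Finset.mem_filter _ _ (Classical.decPred _) _ _).mp hwL
  obtain ⟨hall, hmemL⟩ := hp'
  have hlen : w.length = n := allWords_length hall
  have h2 : (2 : ZMod 2) = 0 := rfl
  have hxb : ∀ h ∈ Finset.Icc 1 (tOf T), xh n T w h < sfun n T h := by
    intro h hh
    rw [Finset.mem_Icc] at hh
    exact (xh_bounds hmemL hh.1 hh.2).2.1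
  -- P1 : eps
  have hterm1 : ∀ h ∈ Finset.Icc 1 (tOf T),
      ((sfun n T h - xh n T w h - 1 : ℕ) : ZMod 2) =
        (sfun n T h : ZMod 2) + (xh n T w h : ZMod 2) + 1 := by
    intro h hh
    have hb := hxb h hh
    have hsub : sfun n T h - xh n T w h - 1 = sfun n T h - (xh n T w h + 1) := by omega
    rw [hsub, Nat.cast_sub (by omega)]
    push_cast
    linear_combination (-(((xh n T w h : ZMod 2)) + 1)) * h2
  have P1 : ((epsP n T w : ℕ) : ZMod 2) =
      (∑ h ∈ Finset.Icc 1 (tOf T), ((sfun n T h : ZMod 2))) +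
      (∑ h ∈ Finset.Icc 1 (tOf T), ((xh n T w h : ZMod 2))) + (tOf T : ZMod 2) := by
    rw [epsP, Nat.cast_sum, Finset.sum_congr rfl hterm1, Finset.sum_add_distrib,
      Finset.sum_add_distrib, Finset.sum_const, Nat.card_Icc, Nat.add_sub_cancel,
      nsmul_eq_mul, mul_one]
  -- P2 : eta
  have hterm2 : ∀ i ∈ Finset.Icc 1 (n-1),
      ((if 0 ≤ pathHt w i then 1 else 0 : ℕ) : ZMod 2) =
        1 + (if pathHt w i < 0 then (1:ZMod 2) else 0) := by
    intro i _
    by_cases hi : pathHt w i < 0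
    · rw [if_neg (by omega), if_pos hi]
      push_cast
      linear_combination (-1 : ZMod 2) * h2
    · rw [if_pos (by omega), if_neg hi]
      push_cast
      ring
  have P2 : ((etaP n w : ℕ) : ZMod 2) = ((n - 1 : ℕ) : ZMod 2) +
      ∑ i ∈ Finset.Icc 1 (n-1), (if pathHt w i < 0 then (1 : ZMod 2) else 0) := by
    rw [etaP, Finset.card_filter, Nat.cast_sum, Finset.sum_congr rfl hterm2,
      Finset.sum_add_distrib, Finset.sum_const, Nat.card_Icc, Nat.add_sub_cancel,
      nsmul_eq_mul, mul_one]
  -- P3 : main induction + bijection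
  have hA := main_ind w hlen hn (n-1) (by omega) le_rfl
  have hnn : n - 1 - 1 = n - 2 := by omega
  rw [hnn] at hA
  have hD : (∑ i ∈ Finset.Icc 1 (n-2),
      (if pathHt w i < 0 ∧ 0 ≤ pathHt w (i+1) then (1 : ZMod 2) else 0)) =
      ((((Finset.Icc 1 (n-2)).filter (fun i => pathHt w i < 0 ∧ 0 ≤ pathHt w (i+1))).card : ℕ) : ZMod 2) := by
    rw [Finset.card_filter, Nat.cast_sum]
    apply Finset.sum_congr rfl
    intro i _
    split_ifs <;> simp
  have hbij := down_card hn hT hlen hmemL hL0 hL0'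
  have hx : (∑ h ∈ Finset.Icc 1 (tOf T), ((xh n T w h : ZMod 2))) =
      ((((Finset.Icc 1 (tOf T)).filter (fun h => (xh n T w h) % 2 = 1)).card : ℕ) : ZMod 2) := by
    rw [Finset.card_filter, Nat.cast_sum]
    apply Finset.sum_congr rfl
    intro h _
    rw [zmod2_natCast]
    split_ifs <;> simp
  have P3 : (∑ i ∈ Finset.Icc 1 (n-1), (if pathHt w i < 0 then (1 : ZMod 2) else 0)) =
      (∑ h ∈ Finset.Icc 1 (tOf T), ((xh n T w h : ZMod 2))) +
      ((n - 1 : ℕ) : ZMod 2) * (if pathHt w (n-1) < 0 then 1 else 0) := by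
    rw [hA, hD, ← hbij, ← hx]
  -- P4 : sum of r_h
  have hterm4 : ∀ h ∈ Finset.Icc 1 (tOf T),
      ((sfun n T h + 1 : ℕ) : ZMod 2) = (sfun n T h : ZMod 2) + 1 := by
    intro h _
    push_cast
    ring
  have P4 : ((∑ h ∈ Finset.Icc 1 (tOf T), (sfun n T h + 1) : ℕ) : ZMod 2) =
      (∑ h ∈ Finset.Icc 1 (tOf T), ((sfun n T h : ZMod 2))) + (tOf T : ZMod 2) := by
    rw [Nat.cast_sum, Finset.sum_congr rfl hterm4, Finset.sum_add_distrib,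
      Finset.sum_const, Nat.card_Icc, Nat.add_sub_cancel, nsmul_eq_mul, mul_one]
  -- P5 : final parity fact
  have hst : sfun n T (tOf T) ≤ n - 1 := by
    have := sfun_le_len (n := n) (le_refl (tOf T)); omega
  have P5 : ((n - 1 : ℕ) : ZMod 2) * (1 + (if pathHt w (n-1) < 0 then (1 : ZMod 2) else 0)) =
      ((if 0 < pathHt w n then n - 1 else 0 : ℕ) : ZMod 2) := by
    have hstep := pathHt_step w (n-1) (by omega)
    have he : n - 1 + 1 = n := by omega
    rw [he] at hstep
    by_cases hpos : 0 < pathHt w n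
    · rw [if_pos hpos, if_neg (show ¬ pathHt w (n-1) < 0 by omega)]
      ring
    · rw [if_neg hpos]
      by_cases hpar : Even n
      · have hΓn : pathHt w n ≠ 0 := hL0' hpar n (Finset.mem_Icc.mpr ⟨by omega, le_rfl⟩)
        have hβ : pathHt w (n-1) < 0 := by
          by_contra hge
          have h0 : pathHt w (n-1) = 0 := by omega
          have hparity := pathHt_parity w (n-1) (by omega)
          rw [h0] at hparity
          have heven : Even (((n - 1 : ℕ) : ℤ)) := by simpa using hparity
          obtain ⟨c, hc⟩ := heven
          obtain ⟨d, hd⟩ := hpar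
          omega
        rw [if_pos hβ]
        linear_combination ((n - 1 : ℕ) : ZMod 2) * h2
      · have hodd : n % 2 = 1 := Nat.not_even_iff.mp hpar
        have hz : ((n - 1 : ℕ) : ZMod 2) = 0 := by
          rw [zmod2_natCast, if_neg (by omega)]
        rw [hz]
        push_cast
        ring
  -- assemble
  have key : ((epsP n T w + etaP n w : ℕ) : ZMod 2) =
      (((if 0 < pathHt w n then n - 1 else 0) +
        ∑ h ∈ Finset.Icc 1 (tOf T), (sfun n T h + 1) : ℕ) : ZMod 2) := by
    rw [Nat.cast_add, Nat.cast_add, P1, P2, P3, P4, ← P5]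
    linear_combination (∑ h ∈ Finset.Icc 1 (tOf T), ((xh n T w h : ZMod 2))) * h2
  exact (ZMod.natCast_eq_natCast_iff _ _ _).mp key
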